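/- For τ in the open upper half of the unit circle (Im τ > 0), if ξ₁ and ξ₂ are multiplicative linear functionals on QC lying in the fiber M_τ(QC) (i.e., ξ_i(f) = f(τ) for all f ∈ C(𝕋)), and ξ₁ and ξ₂ agree on the subalgebra Q̃C of even quasicontinuous functions, then ξ₁ = ξ₂. -/

import Mathlib

open MeasureTheory AddCircle Filter Complex

set_option linter.unusedSectionVars false
set_option maxHeartbeats 1000000

section Aux
variable {T : ℝ} [hT : Fact (0 < T)]
local notation "μT" => (haarAddCircle : Measure (AddCircle T))

lemma fourier_neg_arg (n : ℤ) (t : AddCircle T) : fourier n (-t) = fourier (-n) t := by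
  rw [fourier_apply, fourier_apply, smul_neg, ← neg_smul]

lemma ae_comp_neg {P : AddCircle T → Prop}
    (h : ∀ᵐ t ∂μT, P t) : ∀ᵐ t ∂μT, P (-t) :=
  (Measure.measurePreserving_neg μT).quasiMeasurePreserving.ae h

lemma memTop_fourier (m : ℤ) : MemLp (fun t : AddCircle T => (fourier m t : ℂ)) ⊤ μT := by
  refine memLp_top_of_bound ((map_continuous (fourier m)).aestronglyMeasurable) 1 ?_
  filter_upwards with t
  simp [Circle.norm_coe]

lemma memTop_mul {f g : AddCircle T → ℂ} (hf : MemLp f ⊤ μT) (hg : MemLp g ⊤ μT) :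
    MemLp (f * g) ⊤ μT := by
  have := hf.smul (p := ⊤) (r := ⊤) hg
  simpa [Pi.smul_def, smul_eq_mul, mul_comm] using this

lemma integrable_fourier_smul {f : AddCircle T → ℂ} (hf : MemLp f ⊤ μT) (n : ℤ) :
    Integrable (fun t => (fourier n t : ℂ) * f t) μT := by
  have h := memTop_mul (memTop_fourier (T := T) n) hf
  exact h.integrable le_top

lemma fourierCoeff_add' {f g : AddCircle T → ℂ} (hf : MemLp f ⊤ μT) (hg : MemLp g ⊤ μT) (n : ℤ) :
    fourierCoeff (f + g) n = fourierCoeff f n + fourierCoeff g n := by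
  simp only [fourierCoeff, Pi.add_apply, smul_eq_mul, mul_add]
  exact integral_add (integrable_fourier_smul hf _) (integrable_fourier_smul hg _)

lemma fourierCoeff_comp_neg {f : AddCircle T → ℂ} (n : ℤ) :
    fourierCoeff (fun t => f (-t)) n = fourierCoeff f (-n) := by
  have key := (Measure.measurePreserving_neg μT).integral_comp
    (MeasurableEquiv.neg (AddCircle T)).measurableEmbedding
    (fun t => (fourier n t : ℂ) * f t)
  simp only [fourierCoeff, smul_eq_mul]
  calc ∫ t, (fourier (-n) t : ℂ) * f (-t) ∂μT
      = ∫ t, (fourier n (-t) : ℂ) * f (-t) ∂μT := by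
        congr 1; ext t; rw [fourier_neg_arg]
    _ = ∫ t, (fourier n t : ℂ) * f t ∂μT := key
    _ = fourierCoeff f (-n) := by rw [fourierCoeff]; simp only [neg_neg, smul_eq_mul]

lemma fourierCoeff_fourier' (m n : ℤ) :
    fourierCoeff (fun t : AddCircle T => (fourier m t : ℂ)) n = if n = m then 1 else 0 := by
  simp only [fourierCoeff, smul_eq_mul]
  have h1 : ∀ t : AddCircle T, (fourier (-n) t : ℂ) * fourier m t = fourier (-n + m) t := by
    intro t; rw [fourier_add]
  simp_rw [h1]
  split_ifs with h
  · subst h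
    simp_rw [neg_add_cancel]
    have : ∀ t : AddCircle T, (fourier 0 t : ℂ) = 1 := fun t => fourier_zero
    simp_rw [this]
    simp
  · have hij : -n + m ≠ 0 := by omega
    exact integral_eq_zero_of_add_right_eq_neg (μ := μT)
      (fourier_add_half_inv_index hij hT.out)

lemma fourierCoeff_mul_fourier (f : AddCircle T → ℂ) (m n : ℤ) :
    fourierCoeff (fun t => f t * fourier m t) n = fourierCoeff f (n - m) := by
  simp only [fourierCoeff, smul_eq_mul]
  congr 1; ext t
  have hnm : -(n - m) = -n + m := by ring
  have : (fourier (-(n - m)) t : ℂ) = fourier (-n) t * fourier m t := by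
    rw [hnm, fourier_add]
  rw [this]; ring

lemma fourierCoeff_sub_const {f : AddCircle T → ℂ} (hf : MemLp f ⊤ μT) (c : ℂ) (n : ℤ) :
    fourierCoeff (fun t => f t - c) n = fourierCoeff f n - (if n = 0 then c else 0) := by
  have hc : MemLp (fun _ : AddCircle T => -c) ⊤ μT := memLp_const _
  have h1 := fourierCoeff_add' (T := T) hf hc n
  have h2 : fourierCoeff (fun _ : AddCircle T => -c) n = -(if n = 0 then c else 0) := by
    have he : (fun _ : AddCircle T => -c) = fun t : AddCircle T => -c * fourier 0 t := by
      ext t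
      have : (fourier 0 t : ℂ) = 1 := fourier_zero
      rw [this, mul_one]
    rw [he, fourierCoeff.const_mul, fourierCoeff_fourier']
    split_ifs <;> simp
  have h3 : (fun t => f t - c) = f + fun _ : AddCircle T => -c := by
    ext t; simp [sub_eq_add_neg]
  rw [h3, h1, h2, sub_eq_add_neg]

end Aux


section QCPred
variable [Fact (0 < 2 * Real.pi)]

/-- The quasicontinuity predicate, stated at top level. -/
abbrev QCp (f : AddCircle (2 * Real.pi) → ℂ) : Prop :=
  MemLp f ⊤ (haarAddCircle : Measure (AddCircle (2 * Real.pi))) ∧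
  (∃ g h : AddCircle (2 * Real.pi) → ℂ, Continuous g ∧
      MemLp h ⊤ (haarAddCircle : Measure (AddCircle (2 * Real.pi))) ∧
    (∀ n : ℤ, n < 0 → fourierCoeff h n = 0) ∧
    (∀ᵐ t ∂(haarAddCircle : Measure (AddCircle (2 * Real.pi))), f t = g t + h t)) ∧
  (∃ g h : AddCircle (2 * Real.pi) → ℂ, Continuous g ∧
      MemLp h ⊤ (haarAddCircle : Measure (AddCircle (2 * Real.pi))) ∧
    (∀ n : ℤ, 0 < n → fourierCoeff h n = 0) ∧
    (∀ᵐ t ∂(haarAddCircle : Measure (AddCircle (2 * Real.pi))), f t = g t + h t))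

lemma QCp_cont (g : AddCircle (2 * Real.pi) → ℂ) (hg : Continuous g) : QCp g := by
  have hb : MemLp g ⊤ (haarAddCircle : Measure (AddCircle (2 * Real.pi))) := by
    refine memLp_top_of_bound hg.aestronglyMeasurable
      ‖(⟨g, hg⟩ : C(AddCircle (2 * Real.pi), ℂ))‖ ?_
    filter_upwards with t
    exact (⟨g, hg⟩ : C(AddCircle (2 * Real.pi), ℂ)).norm_coe_le_norm t
  have h0 : MemLp (fun _ : AddCircle (2 * Real.pi) => (0 : ℂ)) ⊤
      (haarAddCircle : Measure (AddCircle (2 * Real.pi))) := memLp_const _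
  have hc0 : ∀ n : ℤ, fourierCoeff (fun _ : AddCircle (2 * Real.pi) => (0 : ℂ)) n = 0 := by
    intro n; simp [fourierCoeff]
  exact ⟨hb, ⟨g, fun _ => 0, hg, h0, fun n _ => hc0 n, by filter_upwards with t; simp⟩,
    ⟨g, fun _ => 0, hg, h0, fun n _ => hc0 n, by filter_upwards with t; simp⟩⟩

lemma QCp_add {a b : AddCircle (2 * Real.pi) → ℂ} (ha : QCp a) (hb : QCp b) : QCp (a + b) := by
  obtain ⟨ha0, ⟨g1, h1, hg1, hh1, hc1, he1⟩, ⟨g2, h2, hg2, hh2, hc2, he2⟩⟩ := ha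
  obtain ⟨hb0, ⟨g1', h1', hg1', hh1', hc1', he1'⟩, ⟨g2', h2', hg2', hh2', hc2', he2'⟩⟩ := hb
  refine ⟨ha0.add hb0,
    ⟨g1 + g1', h1 + h1', hg1.add hg1', hh1.add hh1', ?_, ?_⟩,
    ⟨g2 + g2', h2 + h2', hg2.add hg2', hh2.add hh2', ?_, ?_⟩⟩
  · intro n hn; rw [fourierCoeff_add' hh1 hh1', hc1 n hn, hc1' n hn, add_zero]
  · filter_upwards [he1, he1'] with t ht ht'
    simp only [Pi.add_apply, ht, ht']; ring
  · intro n hn; rw [fourierCoeff_add' hh2 hh2', hc2 n hn, hc2' n hn, add_zero]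
  · filter_upwards [he2, he2'] with t ht ht'
    simp only [Pi.add_apply, ht, ht']; ring

lemma QCp_neg {a : AddCircle (2 * Real.pi) → ℂ} (ha : QCp a) : QCp (fun t => a (-t)) := by
  obtain ⟨ha0, ⟨g1, h1, hg1, hh1, hc1, he1⟩, ⟨g2, h2, hg2, hh2, hc2, he2⟩⟩ := ha
  have mp := Measure.measurePreserving_neg (haarAddCircle : Measure (AddCircle (2 * Real.pi)))
  have hmema : MemLp (fun t => a (-t)) ⊤ (haarAddCircle : Measure (AddCircle (2 * Real.pi))) := by
    exact ha0.comp_measurePreserving mp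
  have hmem1 : MemLp (fun t => h1 (-t)) ⊤ (haarAddCircle : Measure (AddCircle (2 * Real.pi))) := by
    exact hh1.comp_measurePreserving mp
  have hmem2 : MemLp (fun t => h2 (-t)) ⊤ (haarAddCircle : Measure (AddCircle (2 * Real.pi))) := by
    exact hh2.comp_measurePreserving mp
  refine ⟨hmema,
    ⟨fun t => g2 (-t), fun t => h2 (-t), hg2.comp continuous_neg, hmem2, ?_, ?_⟩,
    ⟨fun t => g1 (-t), fun t => h1 (-t), hg1.comp continuous_neg, hmem1, ?_, ?_⟩⟩
  · intro n hn; rw [fourierCoeff_comp_neg]; exact hc2 (-n) (by omega)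
  · exact ae_comp_neg (P := fun t => a t = g2 t + h2 t) he2
  · intro n hn; rw [fourierCoeff_comp_neg]; exact hc1 (-n) (by omega)
  · exact ae_comp_neg (P := fun t => a t = g1 t + h1 t) he1

lemma QCp_mul_fourier_one {a : AddCircle (2 * Real.pi) → ℂ} (ha : QCp a) :
    QCp (a * fun t => fourier 1 t) := by
  obtain ⟨ha0, ⟨g1, h1, hg1, hh1, hc1, he1⟩, ⟨g2, h2, hg2, hh2, hc2, he2⟩⟩ := ha
  have hχmem := memTop_fourier (T := 2 * Real.pi) 1
  refine ⟨memTop_mul ha0 hχmem, ?_, ?_⟩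
  · refine ⟨fun t => g1 t * fourier 1 t, fun t => h1 t * fourier 1 t,
      hg1.mul (map_continuous _), memTop_mul hh1 hχmem, ?_, ?_⟩
    · intro n hn; rw [fourierCoeff_mul_fourier]; exact hc1 _ (by omega)
    · filter_upwards [he1] with t ht; simp only [Pi.mul_apply, ht]; ring
  · refine ⟨fun t => (g2 t + fourierCoeff h2 0) * fourier 1 t,
      fun t => (h2 t - fourierCoeff h2 0) * fourier 1 t,
      (hg2.add continuous_const).mul (map_continuous _),
      memTop_mul (hh2.sub (memLp_const _)) hχmem, ?_, ?_⟩
    · intro n hn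
      rw [fourierCoeff_mul_fourier, fourierCoeff_sub_const hh2]
      by_cases h : n = 1
      · subst h; simp
      · rw [hc2 (n - 1) (by omega), if_neg (by omega), sub_zero]
    · filter_upwards [he2] with t ht; simp only [Pi.mul_apply, ht]; ring

lemma QCp_mul_fourier_neg_one {a : AddCircle (2 * Real.pi) → ℂ} (ha : QCp a) :
    QCp (a * fun t => fourier (-1) t) := by
  obtain ⟨ha0, ⟨g1, h1, hg1, hh1, hc1, he1⟩, ⟨g2, h2, hg2, hh2, hc2, he2⟩⟩ := ha
  have hχmem := memTop_fourier (T := 2 * Real.pi) (-1)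
  refine ⟨memTop_mul ha0 hχmem, ?_, ?_⟩
  · refine ⟨fun t => (g1 t + fourierCoeff h1 0) * fourier (-1) t,
      fun t => (h1 t - fourierCoeff h1 0) * fourier (-1) t,
      (hg1.add continuous_const).mul (map_continuous _),
      memTop_mul (hh1.sub (memLp_const _)) hχmem, ?_, ?_⟩
    · intro n hn
      rw [fourierCoeff_mul_fourier, fourierCoeff_sub_const hh1]
      by_cases h : n = -1
      · subst h; simp
      · rw [hc1 (n - -1) (by omega), if_neg (by omega), sub_zero]
    · filter_upwards [he1] with t ht; simp only [Pi.mul_apply, ht]; ring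
  · refine ⟨fun t => g2 t * fourier (-1) t, fun t => h2 t * fourier (-1) t,
      hg2.mul (map_continuous _), memTop_mul hh2 hχmem, ?_, ?_⟩
    · intro n hn; rw [fourierCoeff_mul_fourier]; exact hc2 _ (by omega)
    · filter_upwards [he2] with t ht; simp only [Pi.mul_apply, ht]; ring

end QCPred

/-- For `τ = e^{iθ}` in the open upper semicircle (`0 < θ < π`), two characters of `QC` lying in
the fiber `M_τ(QC)` (i.e. acting as evaluation at `τ` on continuous functions) which agree on
the even quasicontinuous functions `Q̃C` are equal. -/
theorem stmt_15 [Fact (0 < 2 * Real.pi)]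
    (θ : ℝ) (hθ₀ : 0 < θ) (hθπ : θ < Real.pi) :
    let μ := (haarAddCircle : Measure (AddCircle (2 * Real.pi)))
    let QC : (AddCircle (2 * Real.pi) → ℂ) → Prop := fun f =>
      MemLp f ⊤ μ ∧
      (∃ g h : AddCircle (2 * Real.pi) → ℂ, Continuous g ∧ MemLp h ⊤ μ ∧
        (∀ n : ℤ, n < 0 → fourierCoeff h n = 0) ∧ (∀ᵐ t ∂μ, f t = g t + h t)) ∧
      (∃ g h : AddCircle (2 * Real.pi) → ℂ, Continuous g ∧ MemLp h ⊤ μ ∧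
        (∀ n : ℤ, 0 < n → fourierCoeff h n = 0) ∧ (∀ᵐ t ∂μ, f t = g t + h t))
    ∀ ξ₁ ξ₂ : (AddCircle (2 * Real.pi) → ℂ) → ℂ,
      (∀ f g, QC f → QC g → (f =ᵐ[μ] g) → ξ₁ f = ξ₁ g) →
      (∀ f g, QC f → QC g → (f =ᵐ[μ] g) → ξ₂ f = ξ₂ g) →
      (∀ f g, QC f → QC g → ξ₁ (f + g) = ξ₁ f + ξ₁ g ∧ ξ₂ (f + g) = ξ₂ f + ξ₂ g) →
      (∀ f g, QC f → QC g → ξ₁ (f * g) = ξ₁ f * ξ₁ g ∧ ξ₂ (f * g) = ξ₂ f * ξ₂ g) →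
      (∀ (c : ℂ) f, QC f → ξ₁ (c • f) = c * ξ₁ f ∧ ξ₂ (c • f) = c * ξ₂ f) →
      (∀ g : AddCircle (2 * Real.pi) → ℂ, Continuous g →
        ξ₁ g = g ((θ : ℝ) : AddCircle (2 * Real.pi)) ∧
        ξ₂ g = g ((θ : ℝ) : AddCircle (2 * Real.pi))) →
      (∀ q, QC q → (∀ᵐ t ∂μ, q (-t) = q t) → ξ₁ q = ξ₂ q) →
      ∀ f, QC f → ξ₁ f = ξ₂ f := by
  show ∀ ξ₁ ξ₂ : (AddCircle (2 * Real.pi) → ℂ) → ℂ,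
      (∀ f g, QCp f → QCp g →
        (f =ᵐ[(haarAddCircle : Measure (AddCircle (2 * Real.pi)))] g) → ξ₁ f = ξ₁ g) →
      (∀ f g, QCp f → QCp g →
        (f =ᵐ[(haarAddCircle : Measure (AddCircle (2 * Real.pi)))] g) → ξ₂ f = ξ₂ g) →
      (∀ f g, QCp f → QCp g → ξ₁ (f + g) = ξ₁ f + ξ₁ g ∧ ξ₂ (f + g) = ξ₂ f + ξ₂ g) →
      (∀ f g, QCp f → QCp g → ξ₁ (f * g) = ξ₁ f * ξ₁ g ∧ ξ₂ (f * g) = ξ₂ f * ξ₂ g) →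
      (∀ (c : ℂ) f, QCp f → ξ₁ (c • f) = c * ξ₁ f ∧ ξ₂ (c • f) = c * ξ₂ f) →
      (∀ g : AddCircle (2 * Real.pi) → ℂ, Continuous g →
        ξ₁ g = g ((θ : ℝ) : AddCircle (2 * Real.pi)) ∧
        ξ₂ g = g ((θ : ℝ) : AddCircle (2 * Real.pi))) →
      (∀ q, QCp q → (∀ᵐ t ∂(haarAddCircle : Measure (AddCircle (2 * Real.pi))), q (-t) = q t) →
        ξ₁ q = ξ₂ q) →
      ∀ f, QCp f → ξ₁ f = ξ₂ f
  intro ξ₁ ξ₂ hae₁ hae₂ hadd hmul hsmul hcont heven f hf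
  clear hae₁ hae₂ hsmul
  set χ : AddCircle (2 * Real.pi) → ℂ := fun t => fourier 1 t with hχdef
  set χ' : AddCircle (2 * Real.pi) → ℂ := fun t => fourier (-1) t with hχ'def
  have hχcont : Continuous χ := map_continuous (fourier 1)
  have hχ'cont : Continuous χ' := map_continuous (fourier (-1))
  set fneg : AddCircle (2 * Real.pi) → ℂ := fun t => f (-t) with hfnegdef
  have hfneg : QCp fneg := QCp_neg hf
  have hχQC : QCp χ := QCp_cont χ hχcont
  have hχ'QC : QCp χ' := QCp_cont χ' hχ'cont
  have hfχ : QCp (f * χ) := QCp_mul_fourier_one hf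
  have hfnegχ' : QCp (fneg * χ') := QCp_mul_fourier_neg_one hfneg
  -- first even function: f + fneg
  have hq₁ : QCp (f + fneg) := QCp_add hf hfneg
  have hq₁even : ∀ᵐ t ∂(haarAddCircle : Measure (AddCircle (2 * Real.pi))),
      (f + fneg) (-t) = (f + fneg) t := by
    filter_upwards with t
    simp only [Pi.add_apply, hfnegdef, neg_neg]
    ring
  have E1 : ξ₁ f + ξ₁ fneg = ξ₂ f + ξ₂ fneg := by
    have h := heven (f + fneg) hq₁ hq₁even
    rwa [(hadd f fneg hf hfneg).1, (hadd f fneg hf hfneg).2] at h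
  -- second even function: f * χ + fneg * χ'
  have hq₂ : QCp (f * χ + fneg * χ') := QCp_add hfχ hfnegχ'
  have hq₂even : ∀ᵐ t ∂(haarAddCircle : Measure (AddCircle (2 * Real.pi))),
      (f * χ + fneg * χ') (-t) = (f * χ + fneg * χ') t := by
    filter_upwards with t
    simp only [Pi.add_apply, Pi.mul_apply, hfnegdef, hχdef, hχ'def, neg_neg,
      fourier_neg_arg, neg_neg]
    ring
  have E2' : ξ₁ (f * χ) + ξ₁ (fneg * χ') = ξ₂ (f * χ) + ξ₂ (fneg * χ') := by
    have h := heven (f * χ + fneg * χ') hq₂ hq₂even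
    rwa [(hadd _ _ hfχ hfnegχ').1, (hadd _ _ hfχ hfnegχ').2] at h
  set a : ℂ := χ ((θ : ℝ) : AddCircle (2 * Real.pi)) with hadef
  set b : ℂ := χ' ((θ : ℝ) : AddCircle (2 * Real.pi)) with hbdef
  have E2 : ξ₁ f * a + ξ₁ fneg * b = ξ₂ f * a + ξ₂ fneg * b := by
    rw [(hmul f χ hf hχQC).1, (hmul fneg χ' hfneg hχ'QC).1,
      (hmul f χ hf hχQC).2, (hmul fneg χ' hfneg hχ'QC).2,
      (hcont χ hχcont).1, (hcont χ hχcont).2,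
      (hcont χ' hχ'cont).1, (hcont χ' hχ'cont).2] at E2'
    exact E2'
  -- computing a and b
  have ha : a = Complex.exp (θ * Complex.I) := by
    rw [hadef, hχdef]
    show fourier 1 ((θ : ℝ) : AddCircle (2 * Real.pi)) = Complex.exp (θ * Complex.I)
    rw [fourier_coe_apply]
    congr 1
    push_cast
    have h2π : ((2 : ℂ) * (Real.pi : ℂ)) ≠ 0 := by
      simp only [ne_eq, mul_ne_zero_iff, Complex.ofReal_ne_zero]
      exact ⟨two_ne_zero, Real.pi_ne_zero⟩
    field_simp
  have hb : b = Complex.exp (-(θ * Complex.I)) := by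
    rw [hbdef, hχ'def]
    show fourier (-1) ((θ : ℝ) : AddCircle (2 * Real.pi)) = Complex.exp (-(θ * Complex.I))
    rw [fourier_coe_apply]
    congr 1
    push_cast
    have h2π : ((2 : ℂ) * (Real.pi : ℂ)) ≠ 0 := by
      simp only [ne_eq, mul_ne_zero_iff, Complex.ofReal_ne_zero]
      exact ⟨two_ne_zero, Real.pi_ne_zero⟩
    field_simp
  have hab : a ≠ b := by
    rw [ha, hb]
    intro h
    rw [Complex.exp_eq_exp_iff_exists_int] at h
    obtain ⟨k, hk⟩ := h
    have him : θ = -θ + (k : ℝ) * (2 * Real.pi) := by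
      have h' := congrArg Complex.im hk
      simp [Complex.mul_im, Complex.add_im] at h'
      convert h' using 2 <;> push_cast <;> ring
    have hπ := Real.pi_pos
    have hk1 : (k : ℝ) * Real.pi = θ := by nlinarith [him]
    rcases le_or_gt (k : ℝ) 0 with h0 | h0
    · nlinarith
    · have h1 : (1 : ℝ) ≤ (k : ℝ) := by
        exact_mod_cast (by exact_mod_cast h0 : (0 : ℤ) < k)
      nlinarith
  have hA : ξ₁ f - ξ₂ f = -(ξ₁ fneg - ξ₂ fneg) := by linear_combination E1
  have hAab : (ξ₁ f - ξ₂ f) * (a - b) = 0 := by linear_combination E2 - b * E1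
  rcases mul_eq_zero.mp hAab with h | h
  · exact sub_eq_zero.mp h
  · exact absurd (sub_eq_zero.mp h) hab
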